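/- Let (Ω, F, P) be a probability space and p ≥ 1. Let q : ℝ^p → ℝ be strictly positive everywhere, continuous, and bounded. Let β* ∈ ℝ^p, let β̂_n : Ω → ℝ^p be measurable with β̂_n → β* in probability (i.e., P(‖β̂_n − β*‖ > δ) → 0 for all δ > 0), and let C_n be p×p symmetric positive definite matrices with operator norm ‖C_n‖ → 0 as n → ∞. Let γ̂_n : Ω → ℝ^p be measurable maps such that, almost surely, γ̂_n maximizes the function β ↦ exp(−(β̂_n − β)ᵀC_n⁻¹(β̂_n − β)/2)·q(β) over β ∈ ℝ^p. Then γ̂_n → β* in probability. -/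

import Mathlib

open scoped MatrixOrder
open MeasureTheory Filter Matrix

/-- Consistency of the normal 2REG estimator: if the prior density `q` is
strictly positive, continuous and bounded, `β̂_n → β*` in probability, and the covariance
matrices `C_n` are symmetric positive definite with operator norms tending to `0`, then any
measurable a.s.-maximizers `γ̂_n` of `β ↦ exp(−(β̂_n − β)ᵀC_n⁻¹(β̂_n − β)/2)·q(β)`
converge to `β*` in probability. -/
lemma key_quad {p : ℕ} (C : Matrix (Fin p) (Fin p) ℝ) (hC : C.PosDef) (v : Fin p → ℝ) :
    v ⬝ᵥ v ≤ ‖Matrix.toEuclideanCLM (𝕜 := ℝ) C‖ * (v ⬝ᵥ C⁻¹ *ᵥ v) := by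
  have hdet : IsUnit C.det := isUnit_iff_ne_zero.mpr hC.det_pos.ne'
  obtain ⟨u, hv⟩ : ∃ u, C *ᵥ u = v :=
    ⟨C⁻¹ *ᵥ v, by rw [mulVec_mulVec, Matrix.mul_nonsing_inv _ hdet, one_mulVec]⟩
  have hu : C⁻¹ *ᵥ v = u := by
    rw [← hv, mulVec_mulVec, Matrix.nonsing_inv_mul _ hdet, one_mulVec]
  set S := CFC.sqrt C with hS
  have hS2 : S * S = C := CFC.sqrt_mul_sqrt_self C hC.posSemidef.nonneg
  have hSst : star S = S := IsSelfAdjoint.of_nonneg (CFC.sqrt_nonneg C)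
  have hSH : Sᵀ = S := by
    simpa [Matrix.star_eq_conjTranspose, Matrix.conjTranspose_eq_transpose_of_trivial] using hSst
  have hvm : u ᵥ* S = S *ᵥ u := by rw [← vecMul_transpose, hSH]
  have hQ : v ⬝ᵥ u = (S *ᵥ u) ⬝ᵥ (S *ᵥ u) := by
    conv_lhs => rw [dotProduct_comm, ← hv, ← hS2, ← mulVec_mulVec, dotProduct_mulVec, hvm]
  set e := (WithLp.equiv 2 (Fin p → ℝ)).symm with he
  have hnorm : ∀ x : Fin p → ℝ, ‖e x‖ ^ 2 = x ⬝ᵥ x := by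
    intro x
    rw [EuclideanSpace.norm_eq, Real.sq_sqrt (by positivity)]
    simp [dotProduct, sq, he]
  set TS := Matrix.toEuclideanCLM (𝕜 := ℝ) S with hTS
  have happ : ∀ x : Fin p → ℝ, TS (e x) = e (S *ᵥ x) := by
    intro x
    exact Matrix.toEuclideanCLM_toLp S x
  have hnormC : ‖TS‖ * ‖TS‖ = ‖Matrix.toEuclideanCLM (𝕜 := ℝ) C‖ := by
    rw [← CStarRing.norm_star_mul_self (x := TS), hTS, ← map_star, hSst, ← _root_.map_mul, hS2]
  have h1 : ‖e v‖ ≤ ‖TS‖ * ‖e (S *ᵥ u)‖ := by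
    have hev : e v = TS (e (S *ᵥ u)) := by rw [happ, mulVec_mulVec, hS2, hv]
    rw [hev]; exact TS.le_opNorm _
  have h2 : ‖e v‖ ^ 2 ≤ (‖TS‖ * ‖e (S *ᵥ u)‖) ^ 2 :=
    pow_le_pow_left₀ (norm_nonneg _) h1 2
  calc v ⬝ᵥ v = ‖e v‖ ^ 2 := (hnorm v).symm
    _ ≤ (‖TS‖ * ‖e (S *ᵥ u)‖) ^ 2 := h2
    _ = (‖TS‖ * ‖TS‖) * ‖e (S *ᵥ u)‖ ^ 2 := by ring
    _ = ‖Matrix.toEuclideanCLM (𝕜 := ℝ) C‖ * (v ⬝ᵥ C⁻¹ *ᵥ v) := by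
        rw [hnormC, hnorm, ← hQ, hu]


theorem normal_2REG_consistent
    {Ω : Type*} [MeasurableSpace Ω] (μ : Measure Ω) [IsProbabilityMeasure μ]
    {p : ℕ} (hp : 1 ≤ p)
    (q : EuclideanSpace ℝ (Fin p) → ℝ)
    (hq_pos : ∀ x, 0 < q x) (hq_cont : Continuous q) (hq_bdd : ∃ M, ∀ x, q x ≤ M)
    (βstar : EuclideanSpace ℝ (Fin p))
    (βhat : ℕ → Ω → EuclideanSpace ℝ (Fin p))
    (hβ_meas : ∀ n, Measurable (βhat n))
    (hβ_conv : TendstoInMeasure μ βhat atTop (fun _ => βstar))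
    (C : ℕ → Matrix (Fin p) (Fin p) ℝ)
    (hC_pd : ∀ n, (C n).PosDef)
    (hC_norm : Tendsto (fun n => ‖Matrix.toEuclideanCLM (𝕜 := ℝ) (C n)‖) atTop (nhds 0))
    (γ : ℕ → Ω → EuclideanSpace ℝ (Fin p))
    (hγ_meas : ∀ n, Measurable (γ n))
    (hγ_max : ∀ n, ∀ᵐ ω ∂μ,
        IsMaxOn (fun β : EuclideanSpace ℝ (Fin p) =>
            Real.exp (-((fun i => βhat n ω i - β i) ⬝ᵥ
                (C n)⁻¹.mulVec (fun i => βhat n ω i - β i)) / 2) * q β)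
          Set.univ (γ n ω)) :
    TendstoInMeasure μ γ atTop (fun _ => βstar) := by
  obtain ⟨M, hM⟩ := hq_bdd
  have hM0 : 0 < M := lt_of_lt_of_le (hq_pos βstar) (hM βstar)
  rw [tendstoInMeasure_iff_dist] at hβ_conv ⊢
  intro ε hε
  -- minimum of q on the closed ball of radius ε/2
  obtain ⟨x₀, hx₀, hmin⟩ := (isCompact_closedBall βstar (ε/2)).exists_isMinOn
    ⟨βstar, Metric.mem_closedBall_self (by positivity)⟩ hq_cont.continuousOn
  set c := q x₀ with hc
  have hc0 : 0 < c := hq_pos x₀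
  set L : ℝ := -2 * Real.log (c / M) with hL
  have hN : ∀ᶠ n in atTop, ‖Matrix.toEuclideanCLM (𝕜 := ℝ) (C n)‖ * L < (ε/2)^2 := by
    have := hC_norm.mul_const L
    rw [zero_mul] at this
    exact this.eventually_lt_const (by positivity)
  have hEv : ∀ᶠ n in atTop,
      μ {ω | ε ≤ dist (γ n ω) βstar} ≤ μ {ω | ε/2 ≤ dist (βhat n ω) βstar} := by
    filter_upwards [hN] with n hn
    refine measure_mono_ae ?_
    filter_upwards [hγ_max n] with ω hmax hωs
    replace hωs : ε ≤ dist (γ n ω) βstar := hωs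
    show ε/2 ≤ dist (βhat n ω) βstar
    by_contra hcon
    push_neg at hcon
    -- q (βhat n ω) ≥ c
    have hqb : c ≤ q (βhat n ω) := hmin (Metric.mem_closedBall.mpr (le_of_lt hcon))
    set d : Fin p → ℝ := fun i => βhat n ω i - γ n ω i with hd
    set Q : ℝ := d ⬝ᵥ (C n)⁻¹ *ᵥ d with hQdef
    have hmax' := hmax (Set.mem_univ (βhat n ω))
    simp only [Set.mem_setOf_eq] at hmax'
    have hzero : (fun i => βhat n ω i - βhat n ω i) = (0 : Fin p → ℝ) := by
      funext i; simp
    rw [hzero] at hmax'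
    simp only [zero_dotProduct, neg_zero, zero_div, Real.exp_zero, one_mul] at hmax'
    -- c ≤ exp(-Q/2) * M
    have h1 : c ≤ Real.exp (-Q/2) * M := by
      calc c ≤ q (βhat n ω) := hqb
        _ ≤ Real.exp (-Q/2) * q (γ n ω) := hmax'
        _ ≤ Real.exp (-Q/2) * M :=
            mul_le_mul_of_nonneg_left (hM _) (Real.exp_nonneg _)
    have h2 : c / M ≤ Real.exp (-Q/2) := (div_le_iff₀ hM0).mpr h1
    have h3 : Real.log (c / M) ≤ -Q/2 :=
      (Real.log_le_iff_le_exp (by positivity)).mpr h2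
    have hQL : Q ≤ L := by rw [hL]; linarith
    have hkey := key_quad (C n) (hC_pd n) d
    have hQnorm : ‖Matrix.toEuclideanCLM (𝕜 := ℝ) (C n)‖ * Q
        ≤ ‖Matrix.toEuclideanCLM (𝕜 := ℝ) (C n)‖ * L :=
      mul_le_mul_of_nonneg_left hQL (norm_nonneg _)
    have hdd : d ⬝ᵥ d < (ε/2)^2 := lt_of_le_of_lt (le_trans hkey hQnorm) hn
    have hdist : (dist (βhat n ω) (γ n ω))^2 = d ⬝ᵥ d := by
      rw [dist_eq_norm, EuclideanSpace.norm_eq, Real.sq_sqrt (by positivity)]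
      simp [dotProduct, sq, hd]
    have h4 : dist (βhat n ω) (γ n ω) < ε/2 := by
      nlinarith [dist_nonneg (x := βhat n ω) (y := γ n ω)]
    have h5 : dist (γ n ω) βstar ≤ dist (γ n ω) (βhat n ω) + dist (βhat n ω) βstar :=
      dist_triangle _ _ _
    rw [dist_comm] at h4
    have : dist (γ n ω) βstar < ε := by linarith
    exact absurd hωs (not_le.mpr this)
  exact tendsto_of_tendsto_of_tendsto_of_le_of_le' tendsto_const_nhds
    (hβ_conv (ε/2) (by positivity))
    (Filter.Eventually.of_forall (fun n => by simp)) hEv
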